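/- Let H be a compact quantum group (a compact ∘-Hopf algebra) with normal integral φ. Then the square of the antipode S² is a positive operator with respect to the inner product ⟨x, y⟩ = φ(S(y∘)x); explicitly, ⟨S²(x), x⟩ = ⟨x∘, x∘⟩ > 0 for all x ≠ 0. -/

import Mathlib

open TensorProduct Coalgebra HopfAlgebra

variable {H : Type*} [Ring H] [HopfAlgebra ℂ H]

/-- `φ` is a right integral: `Σ φ(x₁) x₂ = φ(x) 1`. -/
def IsRightIntegral (φ : H →ₗ[ℂ] ℂ) : Prop :=
  ∀ x : H,
    TensorProduct.lid ℂ H ((LinearMap.rTensor H φ) (Coalgebra.comul (R := ℂ) x)) = φ x • 1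

/-- `φ` is a left integral: `Σ x₁ φ(x₂) = φ(x) 1`. -/
def IsLeftIntegral (φ : H →ₗ[ℂ] ℂ) : Prop :=
  ∀ x : H,
    TensorProduct.rid ℂ H ((LinearMap.lTensor H φ) (Coalgebra.comul (R := ℂ) x)) = φ x • 1

/-- The sesquilinear form `⟨x, y⟩ = φ(S(y∘) x)` attached to the integral `φ`. -/
noncomputable def intInner (circ : H → H) (φ : H →ₗ[ℂ] ℂ) (x y : H) : ℂ :=
  φ (antipode (R := ℂ) (circ y) * x)

namespace CQGAux

variable {H : Type*} [Ring H] [HopfAlgebra ℂ H]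

/-- The comultiplication on `H ⊗ H` (universe-polymorphic, by hand). -/
noncomputable def comul2 : (H ⊗[ℂ] H) →ₗ[ℂ] (H ⊗[ℂ] H) ⊗[ℂ] (H ⊗[ℂ] H) :=
  (TensorProduct.tensorTensorTensorComm ℂ H H H H).toLinearMap ∘ₗ
    TensorProduct.map (Coalgebra.comul (R := ℂ)) (Coalgebra.comul (R := ℂ))

/-- Convolution product on `Hom(H ⊗ H, H)`. -/
noncomputable def convH (f g : (H ⊗[ℂ] H) →ₗ[ℂ] H) : (H ⊗[ℂ] H) →ₗ[ℂ] H :=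
  LinearMap.mul' ℂ H ∘ₗ TensorProduct.map f g ∘ₗ comul2

/-- Convolution unit on `Hom(H ⊗ H, H)`. -/
noncomputable def cu2 : (H ⊗[ℂ] H) →ₗ[ℂ] H :=
  LinearMap.toSpanSingleton ℂ H 1 ∘ₗ
    (LinearMap.mul' ℂ ℂ ∘ₗ TensorProduct.map (Coalgebra.counit (R := ℂ))
      (Coalgebra.counit (R := ℂ)))

@[simp] lemma cu2_tmul (a b : H) :
    cu2 (a ⊗ₜ[ℂ] b) =
      (Coalgebra.counit (R := ℂ) a * Coalgebra.counit (R := ℂ) b) • (1 : H) := by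
  simp [cu2]

lemma comul2_tmul {ι κ : Type*} (a b : H) (ra : Coalgebra.Repr ℂ a ι) (rb : Coalgebra.Repr ℂ b κ) :
    comul2 (a ⊗ₜ[ℂ] b) =
      ∑ i ∈ ra.index, ∑ j ∈ rb.index,
        (ra.left i ⊗ₜ[ℂ] rb.left j) ⊗ₜ[ℂ] (ra.right i ⊗ₜ[ℂ] rb.right j) := by
  simp only [comul2, LinearMap.comp_apply, TensorProduct.map_tmul, ← ra.eq, ← rb.eq]
  simp [TensorProduct.sum_tmul, TensorProduct.tmul_sum, tensorTensorTensorComm_tmul]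
  rw [Finset.sum_comm]

lemma convH_tmul {ι κ : Type*} (f g : (H ⊗[ℂ] H) →ₗ[ℂ] H) (a b : H)
    (ra : Coalgebra.Repr ℂ a ι) (rb : Coalgebra.Repr ℂ b κ) :
    convH f g (a ⊗ₜ[ℂ] b) =
      ∑ i ∈ ra.index, ∑ j ∈ rb.index,
        f (ra.left i ⊗ₜ[ℂ] rb.left j) * g (ra.right i ⊗ₜ[ℂ] rb.right j) := by
  simp only [convH, LinearMap.comp_apply, comul2_tmul a b ra rb, map_sum,
    TensorProduct.map_tmul, LinearMap.mul'_apply]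

/-- Collapse `∑ ε(x₁) • x₂ = x`. -/
lemma sum_counit_smul {ι : Type*} (a : H) (r : Coalgebra.Repr ℂ a ι) :
    ∑ i ∈ r.index, Coalgebra.counit (R := ℂ) (r.left i) • r.right i = a := by
  have h := Coalgebra.sum_counit_tmul_eq (R := ℂ) r
  have h2 := congrArg (TensorProduct.lid ℂ H) h
  rw [map_sum] at h2
  simpa only [TensorProduct.lid_tmul, one_smul] using h2

/-- Collapse `∑ x₁ • ε(x₂) = x`. -/
lemma sum_smul_counit {ι : Type*} (a : H) (r : Coalgebra.Repr ℂ a ι) :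
    ∑ i ∈ r.index, Coalgebra.counit (R := ℂ) (r.right i) • r.left i = a := by
  have h := Coalgebra.sum_tmul_counit_eq (R := ℂ) r
  have h2 := congrArg (TensorProduct.rid ℂ H) h
  rw [map_sum] at h2
  simpa only [TensorProduct.rid_tmul, one_smul] using h2

/-- Coassociativity in `Repr` form. -/
lemma coassoc_repr {ι κ μ : Type*} (a : H) (r : Coalgebra.Repr ℂ a ι)
    (s : ∀ i, Coalgebra.Repr ℂ (r.left i) κ) (t : ∀ i, Coalgebra.Repr ℂ (r.right i) μ) :
    ∑ i ∈ r.index, ∑ k ∈ (s i).index,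
        (s i).left k ⊗ₜ[ℂ] ((s i).right k ⊗ₜ[ℂ] r.right i)
      = ∑ i ∈ r.index, ∑ k ∈ (t i).index,
        r.left i ⊗ₜ[ℂ] ((t i).left k ⊗ₜ[ℂ] (t i).right k) := by
  have lhs_eq :
      (∑ i ∈ r.index, ∑ k ∈ (s i).index,
        (s i).left k ⊗ₜ[ℂ] ((s i).right k ⊗ₜ[ℂ] r.right i))
      = (TensorProduct.assoc ℂ H H H).toLinearMap
          ((Coalgebra.comul (R := ℂ)).rTensor H (Coalgebra.comul (R := ℂ) a)) := by
    rw [← r.eq]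
    rw [map_sum, map_sum]
    refine Finset.sum_congr rfl fun i _ => ?_
    rw [LinearMap.rTensor_tmul, ← (s i).eq]
    simp [TensorProduct.sum_tmul]
  have rhs_eq :
      (∑ i ∈ r.index, ∑ k ∈ (t i).index,
        r.left i ⊗ₜ[ℂ] ((t i).left k ⊗ₜ[ℂ] (t i).right k))
      = (Coalgebra.comul (R := ℂ)).lTensor H (Coalgebra.comul (R := ℂ) a) := by
    rw [← r.eq, map_sum]
    refine Finset.sum_congr rfl fun i _ => ?_
    rw [LinearMap.lTensor_tmul, ← (t i).eq]
    simp [TensorProduct.tmul_sum]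
  rw [lhs_eq, rhs_eq]
  simp only [LinearEquiv.coe_coe]
  exact Coalgebra.coassoc_apply (R := ℂ) a

/-- Auxiliary trilinear gadget for the associativity of `convH`. -/
noncomputable def triConv (f g h : (H ⊗[ℂ] H) →ₗ[ℂ] H) :
    ((H ⊗[ℂ] (H ⊗[ℂ] H)) ⊗[ℂ] (H ⊗[ℂ] (H ⊗[ℂ] H))) →ₗ[ℂ] H :=
  LinearMap.mul' ℂ H ∘ₗ
    TensorProduct.map f (LinearMap.mul' ℂ H ∘ₗ TensorProduct.map g h) ∘ₗ
    (TensorProduct.map LinearMap.id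
      (TensorProduct.tensorTensorTensorComm ℂ H H H H).toLinearMap) ∘ₗ
    (TensorProduct.tensorTensorTensorComm ℂ H (H ⊗[ℂ] H) H (H ⊗[ℂ] H)).toLinearMap

@[simp] lemma triConv_tmul (f g h : (H ⊗[ℂ] H) →ₗ[ℂ] H) (p q r p' q' r' : H) :
    triConv f g h ((p ⊗ₜ[ℂ] (q ⊗ₜ[ℂ] r)) ⊗ₜ[ℂ] (p' ⊗ₜ[ℂ] (q' ⊗ₜ[ℂ] r'))) =
      f (p ⊗ₜ[ℂ] p') * (g (q ⊗ₜ[ℂ] q') * h (r ⊗ₜ[ℂ] r')) := by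
  simp [triConv, tensorTensorTensorComm_tmul]

lemma convH_assoc (f g h : (H ⊗[ℂ] H) →ₗ[ℂ] H) :
    convH (convH f g) h = convH f (convH g h) := by
  apply TensorProduct.ext'
  intro a b
  have kA := coassoc_repr a (ℛ ℂ a) (fun i => ℛ ℂ ((ℛ ℂ a).left i))
    (fun i => ℛ ℂ ((ℛ ℂ a).right i))
  have kB := coassoc_repr b (ℛ ℂ b) (fun j => ℛ ℂ ((ℛ ℂ b).left j))
    (fun j => ℛ ℂ ((ℛ ℂ b).right j))
  have L : convH (convH f g) h (a ⊗ₜ[ℂ] b) =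
      triConv f g h
        ((∑ i ∈ (ℛ ℂ a).index, ∑ k ∈ (ℛ ℂ ((ℛ ℂ a).left i)).index,
            (ℛ ℂ ((ℛ ℂ a).left i)).left k ⊗ₜ[ℂ]
              ((ℛ ℂ ((ℛ ℂ a).left i)).right k ⊗ₜ[ℂ] (ℛ ℂ a).right i)) ⊗ₜ[ℂ]
         (∑ j ∈ (ℛ ℂ b).index, ∑ l ∈ (ℛ ℂ ((ℛ ℂ b).left j)).index,
            (ℛ ℂ ((ℛ ℂ b).left j)).left l ⊗ₜ[ℂ]
              ((ℛ ℂ ((ℛ ℂ b).left j)).right l ⊗ₜ[ℂ] (ℛ ℂ b).right j))) := by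
    rw [convH_tmul (convH f g) h a b (ℛ ℂ a) (ℛ ℂ b)]
    simp only [TensorProduct.sum_tmul]
    simp only [TensorProduct.tmul_sum]
    simp only [map_sum, triConv_tmul]
    calc
      ∑ i ∈ (ℛ ℂ a).index, ∑ j ∈ (ℛ ℂ b).index,
          convH f g ((ℛ ℂ a).left i ⊗ₜ[ℂ] (ℛ ℂ b).left j) *
            h ((ℛ ℂ a).right i ⊗ₜ[ℂ] (ℛ ℂ b).right j)
        = ∑ i ∈ (ℛ ℂ a).index, ∑ j ∈ (ℛ ℂ b).index,
            ∑ k ∈ (ℛ ℂ ((ℛ ℂ a).left i)).index, ∑ l ∈ (ℛ ℂ ((ℛ ℂ b).left j)).index,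
              f ((ℛ ℂ ((ℛ ℂ a).left i)).left k ⊗ₜ[ℂ] (ℛ ℂ ((ℛ ℂ b).left j)).left l) *
                (g ((ℛ ℂ ((ℛ ℂ a).left i)).right k ⊗ₜ[ℂ] (ℛ ℂ ((ℛ ℂ b).left j)).right l) *
                  h ((ℛ ℂ a).right i ⊗ₜ[ℂ] (ℛ ℂ b).right j)) := by
          refine Finset.sum_congr rfl fun i _ => Finset.sum_congr rfl fun j _ => ?_
          rw [convH_tmul f g _ _ (ℛ ℂ ((ℛ ℂ a).left i)) (ℛ ℂ ((ℛ ℂ b).left j)),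
            Finset.sum_mul]
          refine Finset.sum_congr rfl fun k _ => ?_
          rw [Finset.sum_mul]
          exact Finset.sum_congr rfl fun l _ => mul_assoc _ _ _
      _ = _ := by
          refine Finset.sum_congr rfl fun i _ => ?_
          rw [Finset.sum_comm]
  have R : convH f (convH g h) (a ⊗ₜ[ℂ] b) =
      triConv f g h
        ((∑ i ∈ (ℛ ℂ a).index, ∑ k ∈ (ℛ ℂ ((ℛ ℂ a).right i)).index,
            (ℛ ℂ a).left i ⊗ₜ[ℂ]
              ((ℛ ℂ ((ℛ ℂ a).right i)).left k ⊗ₜ[ℂ] (ℛ ℂ ((ℛ ℂ a).right i)).right k)) ⊗ₜ[ℂ]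
         (∑ j ∈ (ℛ ℂ b).index, ∑ l ∈ (ℛ ℂ ((ℛ ℂ b).right j)).index,
            (ℛ ℂ b).left j ⊗ₜ[ℂ]
              ((ℛ ℂ ((ℛ ℂ b).right j)).left l ⊗ₜ[ℂ] (ℛ ℂ ((ℛ ℂ b).right j)).right l))) := by
    rw [convH_tmul f (convH g h) a b (ℛ ℂ a) (ℛ ℂ b)]
    simp only [TensorProduct.sum_tmul]
    simp only [TensorProduct.tmul_sum]
    simp only [map_sum, triConv_tmul]
    calc
      ∑ i ∈ (ℛ ℂ a).index, ∑ j ∈ (ℛ ℂ b).index,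
          f ((ℛ ℂ a).left i ⊗ₜ[ℂ] (ℛ ℂ b).left j) *
            convH g h ((ℛ ℂ a).right i ⊗ₜ[ℂ] (ℛ ℂ b).right j)
        = ∑ i ∈ (ℛ ℂ a).index, ∑ j ∈ (ℛ ℂ b).index,
            ∑ k ∈ (ℛ ℂ ((ℛ ℂ a).right i)).index, ∑ l ∈ (ℛ ℂ ((ℛ ℂ b).right j)).index,
              f ((ℛ ℂ a).left i ⊗ₜ[ℂ] (ℛ ℂ b).left j) *
                (g ((ℛ ℂ ((ℛ ℂ a).right i)).left k ⊗ₜ[ℂ] (ℛ ℂ ((ℛ ℂ b).right j)).left l) *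
                  h ((ℛ ℂ ((ℛ ℂ a).right i)).right k ⊗ₜ[ℂ] (ℛ ℂ ((ℛ ℂ b).right j)).right l)) := by
          refine Finset.sum_congr rfl fun i _ => Finset.sum_congr rfl fun j _ => ?_
          rw [convH_tmul g h _ _ (ℛ ℂ ((ℛ ℂ a).right i)) (ℛ ℂ ((ℛ ℂ b).right j)),
            Finset.mul_sum]
          refine Finset.sum_congr rfl fun k _ => ?_
          rw [Finset.mul_sum]
      _ = _ := by
          refine Finset.sum_congr rfl fun i _ => ?_
          rw [Finset.sum_comm]
  rw [L, kA, kB]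
  exact R.symm

lemma convH_unit_left (f : (H ⊗[ℂ] H) →ₗ[ℂ] H) : convH cu2 f = f := by
  apply TensorProduct.ext'
  intro a b
  rw [convH_tmul cu2 f a b (ℛ ℂ a) (ℛ ℂ b)]
  conv_rhs => rw [← sum_counit_smul a (ℛ ℂ a), ← sum_counit_smul b (ℛ ℂ b)]
  simp only [TensorProduct.sum_tmul, TensorProduct.tmul_sum, map_sum]
  conv_rhs => rw [Finset.sum_comm]
  refine Finset.sum_congr rfl fun i _ => Finset.sum_congr rfl fun j _ => ?_
  simp [TensorProduct.smul_tmul', TensorProduct.tmul_smul, smul_smul, mul_comm]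
  rw [← TensorProduct.smul_tmul', map_smul]

lemma convH_unit_right (f : (H ⊗[ℂ] H) →ₗ[ℂ] H) : convH f cu2 = f := by
  apply TensorProduct.ext'
  intro a b
  rw [convH_tmul f cu2 a b (ℛ ℂ a) (ℛ ℂ b)]
  conv_rhs => rw [← sum_smul_counit a (ℛ ℂ a), ← sum_smul_counit b (ℛ ℂ b)]
  simp only [TensorProduct.sum_tmul, TensorProduct.tmul_sum, map_sum]
  conv_rhs => rw [Finset.sum_comm]
  refine Finset.sum_congr rfl fun i _ => Finset.sum_congr rfl fun j _ => ?_
  simp [TensorProduct.smul_tmul', TensorProduct.tmul_smul, smul_smul, mul_comm]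
  rw [← TensorProduct.smul_tmul', map_smul]

lemma antipode_one : antipode (R := ℂ) (1 : H) = 1 := by
  have h := HopfAlgebra.mul_antipode_rTensor_comul_apply (R := ℂ) (a := (1 : H))
  rw [Bialgebra.comul_one, Algebra.TensorProduct.one_def] at h
  simpa using h

/-- A representation of `comul (a * b)` built from representations of `a` and `b`. -/
noncomputable def mulRepr {ι κ : Type*} (a b : H) (ra : Coalgebra.Repr ℂ a ι)
    (rb : Coalgebra.Repr ℂ b κ) : Coalgebra.Repr ℂ (a * b) (ι × κ) where
  index := ra.index ×ˢ rb.index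
  left := fun p => ra.left p.1 * rb.left p.2
  right := fun p => ra.right p.1 * rb.right p.2
  eq := by
    rw [Bialgebra.comul_mul, ← ra.eq, ← rb.eq, Finset.sum_mul_sum]
    rw [Finset.sum_product]
    simp [Algebra.TensorProduct.tmul_mul_tmul]

lemma convH_e1 :
    convH ((antipode (R := ℂ)) ∘ₗ LinearMap.mul' ℂ H) (LinearMap.mul' ℂ H) = (cu2 : (H ⊗[ℂ] H) →ₗ[ℂ] H) := by
  apply TensorProduct.ext'
  intro a b
  rw [convH_tmul _ _ a b (ℛ ℂ a) (ℛ ℂ b)]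
  have h := HopfAlgebra.sum_antipode_mul_eq_algebraMap_counit (R := ℂ) (mulRepr a b (ℛ ℂ a) (ℛ ℂ b))
  simp only [mulRepr] at h
  rw [Finset.sum_product] at h
  simp only [LinearMap.comp_apply, LinearMap.mul'_apply]
  rw [h, cu2_tmul, ← Bialgebra.counit_mul, Algebra.smul_def, mul_one]

lemma convH_e2 :
    convH (LinearMap.mul' ℂ H)
      (LinearMap.mul' ℂ H ∘ₗ TensorProduct.map (antipode (R := ℂ)) (antipode (R := ℂ)) ∘ₗ
        (TensorProduct.comm ℂ H H).toLinearMap) = (cu2 : (H ⊗[ℂ] H) →ₗ[ℂ] H) := by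
  apply TensorProduct.ext'
  intro a b
  rw [convH_tmul _ _ a b (ℛ ℂ a) (ℛ ℂ b)]
  simp only [LinearMap.comp_apply, LinearEquiv.coe_coe, TensorProduct.comm_tmul,
    TensorProduct.map_tmul, LinearMap.mul'_apply, cu2_tmul]
  calc
    ∑ i ∈ (ℛ ℂ a).index, ∑ j ∈ (ℛ ℂ b).index,
        (ℛ ℂ a).left i * (ℛ ℂ b).left j *
          (antipode (R := ℂ) ((ℛ ℂ b).right j) * antipode (R := ℂ) ((ℛ ℂ a).right i))
      = ∑ i ∈ (ℛ ℂ a).index, (ℛ ℂ a).left i *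
          ((∑ j ∈ (ℛ ℂ b).index, (ℛ ℂ b).left j * antipode (R := ℂ) ((ℛ ℂ b).right j)) *
            antipode (R := ℂ) ((ℛ ℂ a).right i)) := by
        refine Finset.sum_congr rfl fun i _ => ?_
        rw [Finset.sum_mul, Finset.mul_sum]
        exact Finset.sum_congr rfl fun j _ => by simp only [mul_assoc]
    _ = ∑ i ∈ (ℛ ℂ a).index, algebraMap ℂ H (Coalgebra.counit (R := ℂ) b) *
          ((ℛ ℂ a).left i * antipode (R := ℂ) ((ℛ ℂ a).right i)) := by
        rw [HopfAlgebra.sum_mul_antipode_eq_algebraMap_counit (R := ℂ) (ℛ ℂ b)]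
        exact Finset.sum_congr rfl fun i _ => by
          rw [← mul_assoc, ← Algebra.commutes, mul_assoc]
    _ = algebraMap ℂ H (Coalgebra.counit (R := ℂ) b) *
          algebraMap ℂ H (Coalgebra.counit (R := ℂ) a) := by
        rw [← Finset.mul_sum, HopfAlgebra.sum_mul_antipode_eq_algebraMap_counit (R := ℂ) (ℛ ℂ a)]
    _ = (Coalgebra.counit (R := ℂ) a * Coalgebra.counit (R := ℂ) b) • (1 : H) := by
        rw [mul_comm (Coalgebra.counit (R := ℂ) a), Algebra.smul_def, map_mul, mul_one]

/-- The antipode is antimultiplicative. -/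
lemma antipode_mul (a b : H) :
    antipode (R := ℂ) (a * b) = antipode (R := ℂ) b * antipode (R := ℂ) a := by
  have key : (antipode (R := ℂ)) ∘ₗ LinearMap.mul' ℂ H =
      LinearMap.mul' ℂ H ∘ₗ TensorProduct.map (antipode (R := ℂ)) (antipode (R := ℂ)) ∘ₗ
        (TensorProduct.comm ℂ H H).toLinearMap := by
    calc (antipode (R := ℂ)) ∘ₗ LinearMap.mul' ℂ H
        = convH ((antipode (R := ℂ)) ∘ₗ LinearMap.mul' ℂ H) cu2 := (convH_unit_right _).symm
      _ = convH ((antipode (R := ℂ)) ∘ₗ LinearMap.mul' ℂ H)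
            (convH (LinearMap.mul' ℂ H)
              (LinearMap.mul' ℂ H ∘ₗ TensorProduct.map (antipode (R := ℂ)) (antipode (R := ℂ)) ∘ₗ
                (TensorProduct.comm ℂ H H).toLinearMap)) := by rw [convH_e2]
      _ = convH (convH ((antipode (R := ℂ)) ∘ₗ LinearMap.mul' ℂ H) (LinearMap.mul' ℂ H))
            (LinearMap.mul' ℂ H ∘ₗ TensorProduct.map (antipode (R := ℂ)) (antipode (R := ℂ)) ∘ₗ
              (TensorProduct.comm ℂ H H).toLinearMap) := (convH_assoc _ _ _).symm
      _ = convH cu2 _ := by rw [convH_e1]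
      _ = _ := convH_unit_left _
  have := LinearMap.congr_fun key (a ⊗ₜ[ℂ] b)
  simpa using this

end CQGAux


namespace CQGAux

lemma left_int_repr {ι : Type*} (φ : H →ₗ[ℂ] ℂ) (hl : IsLeftIntegral φ) (x : H)
    (r : Coalgebra.Repr ℂ x ι) :
    ∑ i ∈ r.index, φ (r.right i) • r.left i = φ x • (1 : H) := by
  have h := hl x
  rw [← r.eq] at h
  rw [map_sum, map_sum] at h
  simpa only [LinearMap.lTensor_tmul, TensorProduct.rid_tmul] using h

lemma left_int_repr_raw (φ : H →ₗ[ℂ] ℂ) (hl : IsLeftIntegral φ) (w : H) {ι : Type*}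
    (s : Finset ι) (f g : ι → H)
    (heq : ∑ i ∈ s, f i ⊗ₜ[ℂ] g i = Coalgebra.comul (R := ℂ) w) :
    ∑ i ∈ s, φ (g i) • f i = φ w • (1 : H) :=
  left_int_repr φ hl w ⟨s, f, g, heq⟩

lemma circ_sum (circ : H → H) (hcadd : ∀ x y : H, circ (x + y) = circ x + circ y)
    {ι : Type*} (s : Finset ι) (v : ι → H) :
    circ (∑ i ∈ s, v i) = ∑ i ∈ s, circ (v i) :=
  map_sum (AddMonoidHom.mk' circ hcadd) v s

universe w

/-- Reindex a representation along `ULift (Fin n)`, to move it to any universe. -/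
noncomputable def uRepr {ι : Type*} (a : H) (r : Coalgebra.Repr ℂ a ι) :
    Coalgebra.Repr ℂ a (ULift.{w} (Fin r.index.card)) where
  index := (Finset.univ : Finset (ULift (Fin r.index.card)))
  left := fun i => r.left (r.index.equivFin.symm i.down)
  right := fun i => r.right (r.index.equivFin.symm i.down)
  eq := by
    classical
    rw [← r.eq]
    have h1 : ∑ i : ULift (Fin r.index.card),
        (r.left (r.index.equivFin.symm i.down) ⊗ₜ[ℂ] r.right (r.index.equivFin.symm i.down))
        = ∑ j : Fin r.index.card,
          (r.left (r.index.equivFin.symm j) ⊗ₜ[ℂ] r.right (r.index.equivFin.symm j)) :=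
      Fintype.sum_equiv Equiv.ulift _ _ (fun _ => rfl)
    have h2 : ∑ j : Fin r.index.card,
        (r.left (r.index.equivFin.symm j) ⊗ₜ[ℂ] r.right (r.index.equivFin.symm j))
        = ∑ x : {y // y ∈ r.index}, ((r.left x : H) ⊗ₜ[ℂ] (r.right x : H)) :=
      Equiv.sum_comp r.index.equivFin.symm
        (fun x => (r.left ↑x : H) ⊗ₜ[ℂ] (r.right ↑x : H))
    have h3 : ∑ x : {y // y ∈ r.index}, ((r.left x : H) ⊗ₜ[ℂ] (r.right x : H))
        = ∑ x ∈ r.index, r.left x ⊗ₜ[ℂ] r.right x :=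
      Finset.sum_coe_sort r.index (fun x => r.left x ⊗ₜ[ℂ] r.right x)
    exact h1.trans (h2.trans h3)

end CQGAux

/-- in a compact quantum group, `S²` is positive with respect to the
inner product given by the integral: `⟨S²(x), x⟩ = ⟨x∘, x∘⟩ > 0` for `x ≠ 0`. -/
theorem antipode_sq_positive
    (circ : H → H)
    (hcadd : ∀ x y : H, circ (x + y) = circ x + circ y)
    (hcsmul : ∀ (a : ℂ) (x : H), circ (a • x) = (starRingEnd ℂ) a • circ x)
    (hcinvol : ∀ x : H, circ (circ x) = x)
    (hcanti : ∀ (x : H) {ι : Type*} (r : Coalgebra.Repr ℂ x ι),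
      Coalgebra.comul (R := ℂ) (circ x) =
        ∑ i ∈ r.index, circ (r.right i) ⊗ₜ[ℂ] circ (r.left i))
    (hcmul : ∀ x y : H, circ (x * y) = circ x * circ y)
    (φ : H →ₗ[ℂ] ℂ) (hr : IsRightIntegral φ) (hl : IsLeftIntegral φ) (hn : φ 1 = 1)
    (hherm : ∀ x y : H, intInner circ φ y x = (starRingEnd ℂ) (intInner circ φ x y))
    (hpos : ∀ x : H, x ≠ 0 →
      0 < (intInner circ φ x x).re ∧ (intInner circ φ x x).im = 0) :
    ∀ x : H,
      intInner circ φ (antipode (R := ℂ) (antipode (R := ℂ) x)) x =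
        intInner circ φ (circ x) (circ x) ∧
      (x ≠ 0 →
        0 < (intInner circ φ (antipode (R := ℂ) (antipode (R := ℂ) x)) x).re ∧
        (intInner circ φ (antipode (R := ℂ) (antipode (R := ℂ) x)) x).im = 0) := by
  intro x
  by_cases h10 : (1 : H) = 0
  · have hsub : Subsingleton H := subsingleton_of_zero_eq_one h10.symm
    constructor
    · exact congrArg₂ (intInner circ φ) (Subsingleton.elim _ _) (Subsingleton.elim _ _)
    · intro hx; exact absurd (Subsingleton.elim x 0) hx
  have hc0 : circ 0 = 0 := by
    have h := hcadd 0 0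
    rw [add_zero] at h
    exact (left_eq_add.mp h)
  -- `circ 1 = 1`
  have hΔc : Coalgebra.comul (R := ℂ) (circ 1) = circ 1 ⊗ₜ[ℂ] circ 1 := by
    have h := hcanti 1 ⟨(Finset.univ : Finset PUnit), fun _ => 1, fun _ => 1, by
      simp [Bialgebra.comul_one, Algebra.TensorProduct.one_def]⟩
    simpa using h
  have hec : Coalgebra.counit (R := ℂ) (circ (1 : H)) • circ (1 : H) = circ 1 := by
    have h := Coalgebra.rTensor_counit_comul (R := ℂ) (circ (1 : H))
    rw [hΔc] at h
    simp only [LinearMap.rTensor_tmul] at h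
    have h2 := congrArg (TensorProduct.lid ℂ H) h
    simpa using h2
  have hcne : circ (1 : H) ≠ 0 := fun hc => h10 (by rw [← hcinvol 1, hc, hc0])
  have hεc : Coalgebra.counit (R := ℂ) (circ (1 : H)) = 1 := by
    by_contra hne
    have hs : Coalgebra.counit (R := ℂ) (circ (1 : H)) - 1 ≠ 0 := sub_ne_zero.mpr hne
    have h3 : (Coalgebra.counit (R := ℂ) (circ (1 : H)) - 1) • circ (1 : H) = 0 := by
      rw [sub_smul, one_smul, hec, sub_self]
    have h4 : circ (1 : H) = 0 := by
      have h5 := congrArg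
        (fun z => (Coalgebra.counit (R := ℂ) (circ (1 : H)) - 1)⁻¹ • z) h3
      simpa [smul_smul, inv_mul_cancel₀ hs] using h5
    exact hcne h4
  have hSc : antipode (R := ℂ) (circ (1 : H)) * circ 1 = 1 := by
    have h := HopfAlgebra.mul_antipode_rTensor_comul_apply (R := ℂ) (a := circ (1 : H))
    rw [hΔc] at h
    simp only [LinearMap.rTensor_tmul, LinearMap.mul'_apply, hεc, map_one] at h
    exact h
  have hcc : circ 1 * circ 1 = circ (1 : H) := by
    have h := hcmul 1 1
    rw [mul_one] at h
    exact h.symm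
  have hc1 : circ (1 : H) = 1 := by
    calc circ (1 : H) = 1 * circ 1 := (one_mul _).symm
      _ = (antipode (R := ℂ) (circ (1 : H)) * circ 1) * circ 1 := by rw [hSc]
      _ = antipode (R := ℂ) (circ (1 : H)) * (circ 1 * circ 1) := mul_assoc _ _ _
      _ = 1 := by rw [hcc, hSc]
  -- the star identity `φ (S (circ z)) = conj (φ z)`
  have hstar : ∀ z : H, φ (antipode (R := ℂ) (circ z)) = (starRingEnd ℂ) (φ z) := by
    intro z
    have h := hherm 1 z
    unfold intInner at h
    rw [hc1, CQGAux.antipode_one, one_mul, mul_one] at h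
    have h2 := congrArg (starRingEnd ℂ) h
    simpa [Complex.conj_conj] using h2.symm
  -- the linear functional `ψ w = conj (φ (circ w))`
  obtain ⟨ψ, hψ⟩ : ∃ ψ : H →ₗ[ℂ] ℂ, ∀ w, ψ w = (starRingEnd ℂ) (φ (circ w)) := by
    refine ⟨⟨⟨fun w => (starRingEnd ℂ) (φ (circ w)), ?_⟩, ?_⟩, fun _ => rfl⟩
    · intro u v
      rw [hcadd]
      simp
    · intro c u
      dsimp only
      rw [hcsmul]
      simp
  have hψ1 : ψ 1 = 1 := by rw [hψ, hc1, hn, map_one]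
  -- `ψ` is a right integral
  have hψint : ∀ (w : H) {ι : Type _} (r : Coalgebra.Repr ℂ w ι),
      ∑ i ∈ r.index, ψ (r.left i) • r.right i = ψ w • (1 : H) := by
    intro w _ r
    have h := CQGAux.left_int_repr_raw φ hl (circ w) r.index
      (fun i => circ (r.right i)) (fun i => circ (r.left i)) (hcanti w r).symm
    have h2 := congrArg circ h
    rw [CQGAux.circ_sum circ hcadd] at h2
    simp only [hcsmul, hcinvol, hc1] at h2
    simp only [hψ]
    exact h2
  -- uniqueness of the normalized integral: `ψ = φ`
  have hφψ : ∀ w : H, ψ w = φ w := by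
    intro w
    have e1 := congrArg φ (hψint w (CQGAux.uRepr w (ℛ ℂ w)))
    have e2 := congrArg ψ (CQGAux.left_int_repr φ hl w (CQGAux.uRepr w (ℛ ℂ w)))
    simp only [map_sum, map_smul, smul_eq_mul, hn, hψ1, mul_one] at e1 e2
    rw [← e1, ← e2]
    exact Finset.sum_congr rfl fun i _ => mul_comm _ _
  have hF : ∀ w : H, φ (circ w) = (starRingEnd ℂ) (φ w) := by
    intro w
    have h := hφψ w
    rw [hψ] at h
    have h2 := congrArg (starRingEnd ℂ) h
    simpa [Complex.conj_conj] using h2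
  -- `φ ∘ S = φ`
  have hφS : ∀ w : H, φ (antipode (R := ℂ) w) = φ w := by
    intro w
    have h := hstar (circ w)
    rw [hcinvol, hF] at h
    simpa [Complex.conj_conj] using h
  -- the main identity
  have main : intInner circ φ (antipode (R := ℂ) (antipode (R := ℂ) x)) x =
      intInner circ φ (circ x) (circ x) := by
    show φ (antipode (R := ℂ) (circ x) * antipode (R := ℂ) (antipode (R := ℂ) x)) =
      φ (antipode (R := ℂ) (circ (circ x)) * circ x)
    rw [hcinvol, ← CQGAux.antipode_mul (antipode (R := ℂ) x) (circ x), hφS]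
  refine ⟨main, fun hx => ?_⟩
  have hcx : circ x ≠ 0 := fun hc => hx (by rw [← hcinvol x, hc, hc0])
  rw [main]
  exact hpos (circ x) hcx
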